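/- Let s_0, s_1, …, s_n ∈ ℝ with s_i > 0 for all 0 ≤ i ≤ n and s_0 + s_1 + ⋯ + s_n < 1. Let L(y) = ∑_{i=1}^n λ_i y_i with all λ_i ≠ 0. Then the integral ∫_{ℝ^n} (1 + |L(y)|)^{s_0 − 1} ∏_{i=1}^n |y_i|^{s_i − 1} dy is finite. -/

import Mathlib

open scoped BigOperators
open MeasureTheory Set
open scoped ENNReal

namespace DecayAux

lemma lint_comp_neg (f : ℝ → ℝ≥0∞) (hf : Measurable f) :
    ∫⁻ t : ℝ, f (-t) = ∫⁻ t : ℝ, f t :=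
  (Measure.measurePreserving_neg (volume : Measure ℝ)).lintegral_comp hf

lemma lint_set_neg (f : ℝ → ℝ≥0∞) (hf : Measurable f) (hfe : ∀ t, f (-t) = f t)
    {S : Set ℝ} (hS : MeasurableSet S) :
    ∫⁻ t in -S, f t = ∫⁻ t in S, f t := by
  rw [← lintegral_indicator hS.neg, ← lintegral_indicator hS]
  rw [← lint_comp_neg (S.indicator f) (hf.indicator hS)]
  congr 1
  funext t
  by_cases h : -t ∈ S <;> simp [Set.indicator, Set.mem_neg, h, hfe]

lemma meas_abs_rpow (c : ℝ) : Measurable (fun t : ℝ => ENNReal.ofReal (|t| ^ c)) :=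
  (measurable_abs.pow_const c).ennreal_ofReal



lemma lint_Ioc_rpow {s : ℝ} (hs : 0 < s) {M : ℝ} (hM : 0 ≤ M) :
    ∫⁻ t in Ioc (0:ℝ) M, ENNReal.ofReal (|t| ^ (s - 1)) ≤ ENNReal.ofReal (M ^ s / s) := by
  have hcong : EqOn (fun t : ℝ => |t| ^ (s - 1)) (fun t : ℝ => t ^ (s - 1)) (Ioc 0 M) :=
    fun t ht => by simp [abs_of_pos ht.1]
  have hInt : IntegrableOn (fun x : ℝ => x ^ (s - 1)) (Ioc 0 M) :=
    (intervalIntegral.intervalIntegrable_rpow' (by linarith) (a := 0) (b := M)).1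
  have hInt' : IntegrableOn (fun t : ℝ => |t| ^ (s - 1)) (Ioc 0 M) :=
    hInt.congr_fun (fun t ht => (hcong ht).symm) measurableSet_Ioc
  rw [← ofReal_integral_eq_lintegral_ofReal hInt'
    (Filter.Eventually.of_forall fun t => Real.rpow_nonneg (abs_nonneg t) _)]
  apply ENNReal.ofReal_le_ofReal
  have h1 : ∫ t in Ioc (0:ℝ) M, |t| ^ (s - 1) = ∫ t in Ioc (0:ℝ) M, t ^ (s - 1) :=
    setIntegral_congr_fun measurableSet_Ioc hcong
  have h2 : ∫ t in Ioc (0:ℝ) M, t ^ (s - 1) = ∫ t in (0:ℝ)..M, t ^ (s - 1) :=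
    (intervalIntegral.integral_of_le hM).symm
  rw [h1, h2, integral_rpow (Or.inl (by linarith))]
  rw [sub_add_cancel, Real.zero_rpow hs.ne']
  simp

lemma lint_abs_rpow {s : ℝ} (hs : 0 < s) {M : ℝ} (hM : 0 ≤ M) :
    ∫⁻ t in Icc (-M) M, ENNReal.ofReal (|t| ^ (s - 1)) ≤ ENNReal.ofReal (2 / s * M ^ s) := by
  have hmeas := meas_abs_rpow (s - 1)
  have hsub : Icc (-M) M ⊆ Icc (-M) 0 ∪ Ioc 0 M := by
    intro t ht
    rcases le_or_gt t 0 with h | h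
    · exact Or.inl ⟨ht.1, h⟩
    · exact Or.inr ⟨h, ht.2⟩
  refine le_trans (lintegral_mono_set hsub) ?_
  refine le_trans (lintegral_union_le _ _ _) ?_
  have hneg : Icc (-M) (0:ℝ) = -(Icc (0:ℝ) M) := by
    rw [Set.neg_Icc, neg_zero]
  have he : ∫⁻ t in Icc (-M) (0:ℝ), ENNReal.ofReal (|t| ^ (s - 1))
      = ∫⁻ t in Icc (0:ℝ) M, ENNReal.ofReal (|t| ^ (s - 1)) := by
    rw [hneg]
    exact lint_set_neg _ hmeas (fun t => by rw [abs_neg]) measurableSet_Icc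
  have hIcc : ∫⁻ t in Icc (0:ℝ) M, ENNReal.ofReal (|t| ^ (s - 1))
      = ∫⁻ t in Ioc (0:ℝ) M, ENNReal.ofReal (|t| ^ (s - 1)) :=
    (setLIntegral_congr Ioc_ae_eq_Icc).symm
  rw [he, hIcc]
  refine le_trans (add_le_add (lint_Ioc_rpow hs hM) (lint_Ioc_rpow hs hM)) ?_
  rw [← ENNReal.ofReal_add (by positivity) (by positivity)]
  apply ENNReal.ofReal_le_ofReal
  rw [div_mul_eq_mul_div]
  ring_nf
  exact le_refl _

lemma lint_tail_rpow {p : ℝ} (hp : p < -1) {M : ℝ} (hM : 0 < M) :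
    ∫⁻ t in {t : ℝ | M < |t|}, ENNReal.ofReal (|t| ^ p)
      ≤ ENNReal.ofReal (2 / (-(p+1)) * M ^ (p+1)) := by
  have hmeas := meas_abs_rpow p
  have hset : {t : ℝ | M < |t|} = Iio (-M) ∪ Ioi M := by
    ext t
    simp only [Set.mem_setOf_eq, Set.mem_union, Set.mem_Iio, Set.mem_Ioi, lt_abs]
    constructor
    · rintro (h | h)
      · right; exact h
      · left; linarith
    · rintro (h | h)
      · right; linarith
      · left; exact h
  have hcore : ∫⁻ t in Ioi M, ENNReal.ofReal (|t| ^ p)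
      ≤ ENNReal.ofReal (M ^ (p+1) / (-(p+1))) := by
    have hcong : EqOn (fun t : ℝ => |t| ^ p) (fun t : ℝ => t ^ p) (Ioi M) :=
      fun t ht => by simp [abs_of_pos (lt_trans hM ht)]
    have hInt' : IntegrableOn (fun t : ℝ => |t| ^ p) (Ioi M) :=
      (integrableOn_Ioi_rpow_of_lt hp hM).congr_fun (fun t ht => (hcong ht).symm)
        measurableSet_Ioi
    rw [← ofReal_integral_eq_lintegral_ofReal hInt'
      (Filter.Eventually.of_forall fun t => Real.rpow_nonneg (abs_nonneg t) _)]
    apply ENNReal.ofReal_le_ofReal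
    rw [setIntegral_congr_fun measurableSet_Ioi hcong, integral_Ioi_rpow_of_lt hp hM]
    rw [div_neg, neg_div]
  have hneg : ∫⁻ t in Iio (-M), ENNReal.ofReal (|t| ^ p)
      = ∫⁻ t in Ioi M, ENNReal.ofReal (|t| ^ p) := by
    have : Iio (-M) = -(Ioi M) := by rw [Set.neg_Ioi]
    rw [this]
    exact lint_set_neg _ hmeas (fun t => by rw [abs_neg]) measurableSet_Ioi
  rw [hset]
  refine le_trans (lintegral_union_le _ _ _) ?_
  rw [hneg]
  refine le_trans (add_le_add hcore hcore) ?_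
  have hnn : 0 ≤ M ^ (p+1) / (-(p+1)) := div_nonneg (Real.rpow_nonneg hM.le _) (by linarith)
  rw [← ENNReal.ofReal_add hnn hnn]
  apply ENNReal.ofReal_le_ofReal
  rw [div_mul_eq_mul_div]
  ring_nf
  exact le_refl _

lemma aux_one_dim {r s : ℝ} (hr : 0 < r) (hs : 0 < s) (hrs : r + s < 1) :
    ∃ C : ℝ≥0∞, C ≠ ⊤ ∧ ∀ a : ℝ,
      ∫⁻ t : ℝ, ENNReal.ofReal (|t| ^ (s - 1) * (1 + |a + t|) ^ (r - 1))
        ≤ C * ENNReal.ofReal ((1 + |a|) ^ (r + s - 1)) := by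
  refine ⟨ENNReal.ofReal (4 / s + 4 / r + 24 / (1 - (r + s))), ENNReal.ofReal_ne_top, ?_⟩
  intro a
  set b : ℝ := 1 + |a| with hbdef
  have hb1 : (1:ℝ) ≤ b := le_add_of_nonneg_right (abs_nonneg a)
  have hb0 : (0:ℝ) < b := lt_of_lt_of_le one_pos hb1
  set M : ℝ := b / 2 with hMdef
  have hM0 : 0 < M := by positivity
  set σ : ℝ := r + s - 1 with hσdef
  have hσ0 : σ < 0 := by simp only [hσdef]; linarith
  have hσ1 : -1 < σ := by simp only [hσdef]; linarith
  have hbσ : 0 ≤ b ^ σ := Real.rpow_nonneg hb0.le σ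
  -- key scaling inequality
  have hMσ : M ^ σ ≤ 2 * b ^ σ := by
    have h2 : (2:ℝ)⁻¹ ≤ (2:ℝ) ^ σ := by
      have := Real.rpow_le_rpow_of_exponent_le (x := 2) one_le_two hσ1.le
      rwa [Real.rpow_neg_one] at this
    have : M ^ σ = b ^ σ / (2:ℝ) ^ σ := Real.div_rpow hb0.le (by norm_num) σ
    rw [this]
    calc b ^ σ / (2:ℝ) ^ σ ≤ b ^ σ / (2:ℝ)⁻¹ :=
          div_le_div_of_nonneg_left hbσ (by norm_num) h2
      _ = 2 * b ^ σ := by field_simp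
  -- the three majorant pieces
  set hB : ℝ → ℝ≥0∞ :=
    (Icc (-M) M).indicator (fun v => ENNReal.ofReal (M ^ (s-1) * (1 + |v|) ^ (r-1))) with hhB
  set gA : ℝ → ℝ≥0∞ :=
    (Icc (-M) M).indicator (fun t => ENNReal.ofReal (M ^ (r-1) * |t| ^ (s-1))) with hgA
  set gB : ℝ → ℝ≥0∞ := fun t => hB (a + t) with hgB
  set gC : ℝ → ℝ≥0∞ :=
    {t : ℝ | M < |t|}.indicator (fun t => ENNReal.ofReal (6 * |t| ^ (r+s-2))) with hgC
  have mhB : Measurable hB :=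
    Measurable.indicator (((measurable_const.add measurable_abs).pow_const
      (r-1)).const_mul _).ennreal_ofReal measurableSet_Icc
  have mA : Measurable gA :=
    Measurable.indicator ((measurable_abs.pow_const (s-1)).const_mul _).ennreal_ofReal
      measurableSet_Icc
  have mB : Measurable gB := mhB.comp (measurable_const.add measurable_id)
  have mCset : MeasurableSet {t : ℝ | M < |t|} :=
    measurableSet_lt measurable_const measurable_abs
  have mC : Measurable gC :=
    Measurable.indicator ((measurable_abs.pow_const (r+s-2)).const_mul _).ennreal_ofReal mCset
  -- pointwise bound
  have hpt : ∀ t : ℝ, ENNReal.ofReal (|t| ^ (s - 1) * (1 + |a + t|) ^ (r - 1))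
      ≤ gA t + gB t + gC t := by
    intro t
    have h1 : |a| ≤ |a + t| + |t| := by
      calc |a| = |(a + t) + (-t)| := by ring_nf
        _ ≤ |a + t| + |(-t)| := abs_add_le _ _
        _ = |a + t| + |t| := by rw [abs_neg]
    have h1' : |t| ≤ |a + t| + |a| := by
      calc |t| = |(a + t) + (-a)| := by ring_nf
        _ ≤ |a + t| + |(-a)| := abs_add_le _ _
        _ = |a + t| + |a| := by rw [abs_neg]
    rcases le_or_gt |t| M with h | h
    · have hmem : t ∈ Icc (-M) M := abs_le.mp h
      have hMle : M ≤ 1 + |a + t| := by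
        have : b = 2 * M := by rw [hMdef]; ring
        simp only [hbdef] at this
        linarith
      have hbd : |t| ^ (s-1) * (1 + |a + t|) ^ (r-1) ≤ M ^ (r-1) * |t| ^ (s-1) := by
        have h2 : (1 + |a + t|) ^ (r-1) ≤ M ^ (r-1) :=
          Real.rpow_le_rpow_of_nonpos hM0 hMle (by linarith)
        calc |t| ^ (s-1) * (1 + |a + t|) ^ (r-1) ≤ |t| ^ (s-1) * M ^ (r-1) :=
              mul_le_mul_of_nonneg_left h2 (Real.rpow_nonneg (abs_nonneg t) _)
          _ = M ^ (r-1) * |t| ^ (s-1) := mul_comm _ _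
      have : ENNReal.ofReal (|t| ^ (s - 1) * (1 + |a + t|) ^ (r - 1)) ≤ gA t := by
        rw [hgA, Set.indicator_of_mem hmem]
        exact ENNReal.ofReal_le_ofReal hbd
      exact le_trans this (le_trans (self_le_add_right _ _) (self_le_add_right _ _))
    · rcases le_or_gt |a + t| M with h2 | h2
      · have hmem : a + t ∈ Icc (-M) M := abs_le.mp h2
        have hbd : |t| ^ (s-1) * (1 + |a + t|) ^ (r-1)
            ≤ M ^ (s-1) * (1 + |a + t|) ^ (r-1) := by
          have h3 : |t| ^ (s-1) ≤ M ^ (s-1) :=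
            Real.rpow_le_rpow_of_nonpos hM0 h.le (by linarith)
          exact mul_le_mul_of_nonneg_right h3 (Real.rpow_nonneg (by positivity) _)
        have : ENNReal.ofReal (|t| ^ (s - 1) * (1 + |a + t|) ^ (r - 1)) ≤ gB t := by
          rw [hgB]
          simp only [hhB, Set.indicator_of_mem hmem]
          exact ENNReal.ofReal_le_ofReal hbd
        exact le_trans this (le_trans (le_add_self) (self_le_add_right _ _))
      · have hmem : t ∈ {t : ℝ | M < |t|} := h
        have ht0 : 0 < |t| := lt_trans hM0 h
        have key : |t| / 6 ≤ 1 + |a + t| := by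
          have hMlt : (1 + |a|) / 2 < |a + t| := h2
          linarith
        have h3 : (1 + |a + t|) ^ (r-1) ≤ (|t| / 6) ^ (r-1) :=
          Real.rpow_le_rpow_of_nonpos (by positivity) key (by linarith)
        have h4 : (|t| / 6) ^ (r-1) ≤ 6 * |t| ^ (r-1) := by
          have h6 : ((6:ℝ) ^ (r-1))⁻¹ = (6:ℝ) ^ (1-r) := by
            rw [← Real.rpow_neg (by norm_num : (0:ℝ) ≤ 6)]
            norm_num
          have h6' : (6:ℝ) ^ (1-r) ≤ 6 := by
            calc (6:ℝ) ^ (1-r) ≤ (6:ℝ) ^ (1:ℝ) :=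
                  Real.rpow_le_rpow_of_exponent_le (by norm_num) (by linarith)
              _ = 6 := Real.rpow_one 6
          rw [Real.div_rpow (abs_nonneg t) (by norm_num : (0:ℝ) ≤ 6), div_eq_mul_inv, h6]
          calc |t| ^ (r-1) * (6:ℝ) ^ (1-r) ≤ |t| ^ (r-1) * 6 :=
                mul_le_mul_of_nonneg_left h6' (Real.rpow_nonneg (abs_nonneg t) _)
            _ = 6 * |t| ^ (r-1) := mul_comm _ _
        have hexp : (s-1) + (r-1) = r + s - 2 := by ring
        have hbd : |t| ^ (s-1) * (1 + |a + t|) ^ (r-1) ≤ 6 * |t| ^ (r+s-2) := by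
          calc |t| ^ (s-1) * (1 + |a + t|) ^ (r-1) ≤ |t| ^ (s-1) * (6 * |t| ^ (r-1)) :=
                mul_le_mul_of_nonneg_left (h3.trans h4) (Real.rpow_nonneg (abs_nonneg t) _)
            _ = 6 * (|t| ^ (s-1) * |t| ^ (r-1)) := by ring
            _ = 6 * |t| ^ (r+s-2) := by rw [← Real.rpow_add ht0, hexp]
        have : ENNReal.ofReal (|t| ^ (s - 1) * (1 + |a + t|) ^ (r - 1)) ≤ gC t := by
          rw [hgC, Set.indicator_of_mem hmem]
          exact ENNReal.ofReal_le_ofReal hbd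
        exact le_trans this le_add_self
  -- integral bounds for the three pieces
  have IA : ∫⁻ t, gA t ≤ ENNReal.ofReal (4 / s * b ^ σ) := by
    rw [hgA, lintegral_indicator measurableSet_Icc]
    have e1 : ∀ t : ℝ, ENNReal.ofReal (M ^ (r-1) * |t| ^ (s-1))
        = ENNReal.ofReal (M ^ (r-1)) * ENNReal.ofReal (|t| ^ (s-1)) :=
      fun t => ENNReal.ofReal_mul (Real.rpow_nonneg hM0.le _)
    simp_rw [e1]
    rw [lintegral_const_mul _ (meas_abs_rpow (s-1))]
    calc ENNReal.ofReal (M ^ (r-1)) * ∫⁻ t in Icc (-M) M, ENNReal.ofReal (|t| ^ (s-1))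
        ≤ ENNReal.ofReal (M ^ (r-1)) * ENNReal.ofReal (2 / s * M ^ s) :=
          mul_le_mul_right (lint_abs_rpow hs hM0.le) _
      _ = ENNReal.ofReal (M ^ (r-1) * (2 / s * M ^ s)) :=
          (ENNReal.ofReal_mul (Real.rpow_nonneg hM0.le _)).symm
      _ ≤ ENNReal.ofReal (4 / s * b ^ σ) := by
          apply ENNReal.ofReal_le_ofReal
          have : M ^ (r-1) * (2 / s * M ^ s) = 2 / s * M ^ σ := by
            rw [mul_comm (M ^ (r-1)), mul_assoc, ← Real.rpow_add hM0]
            congr 1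
            · congr 1; ring
          rw [this]
          calc 2 / s * M ^ σ ≤ 2 / s * (2 * b ^ σ) := by
                apply mul_le_mul_of_nonneg_left hMσ (by positivity)
            _ = 4 / s * b ^ σ := by ring
  have IB : ∫⁻ t, gB t ≤ ENNReal.ofReal (4 / r * b ^ σ) := by
    have htrans : ∫⁻ t, gB t = ∫⁻ v, hB v := by
      rw [hgB]
      exact (measurePreserving_add_left volume a).lintegral_comp mhB
    rw [htrans, hhB, lintegral_indicator measurableSet_Icc]
    have e1 : ∀ v : ℝ, ENNReal.ofReal (M ^ (s-1) * (1 + |v|) ^ (r-1))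
        = ENNReal.ofReal (M ^ (s-1)) * ENNReal.ofReal ((1 + |v|) ^ (r-1)) :=
      fun v => ENNReal.ofReal_mul (Real.rpow_nonneg hM0.le _)
    simp_rw [e1]
    rw [lintegral_const_mul (f := fun v : ℝ => ENNReal.ofReal ((1 + |v|) ^ (r-1))) _
      (((measurable_const.add measurable_abs).pow_const (r-1)).ennreal_ofReal)]
    have hmono : ∫⁻ v in Icc (-M) M, ENNReal.ofReal ((1 + |v|) ^ (r-1))
        ≤ ∫⁻ v in Icc (-M) M, ENNReal.ofReal (|v| ^ (r-1)) := by
      apply lintegral_mono_ae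
      apply ae_restrict_of_ae
      have h0 : ∀ᵐ v : ℝ, v ≠ (0:ℝ) := by
        rw [ae_iff]
        simp [Real.volume_singleton]
      filter_upwards [h0] with v hv
      apply ENNReal.ofReal_le_ofReal
      exact Real.rpow_le_rpow_of_nonpos (abs_pos.mpr hv)
        (le_add_of_nonneg_left one_pos.le) (by linarith)
    calc ENNReal.ofReal (M ^ (s-1)) * ∫⁻ v in Icc (-M) M, ENNReal.ofReal ((1 + |v|) ^ (r-1))
        ≤ ENNReal.ofReal (M ^ (s-1)) * ENNReal.ofReal (2 / r * M ^ r) :=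
          mul_le_mul_right (le_trans hmono (lint_abs_rpow hr hM0.le)) _
      _ = ENNReal.ofReal (M ^ (s-1) * (2 / r * M ^ r)) :=
          (ENNReal.ofReal_mul (Real.rpow_nonneg hM0.le _)).symm
      _ ≤ ENNReal.ofReal (4 / r * b ^ σ) := by
          apply ENNReal.ofReal_le_ofReal
          have : M ^ (s-1) * (2 / r * M ^ r) = 2 / r * M ^ σ := by
            rw [mul_comm (M ^ (s-1)), mul_assoc, ← Real.rpow_add hM0]
            congr 1
            · congr 1; ring
          rw [this]
          calc 2 / r * M ^ σ ≤ 2 / r * (2 * b ^ σ) := by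
                apply mul_le_mul_of_nonneg_left hMσ (by positivity)
            _ = 4 / r * b ^ σ := by ring
  have IC : ∫⁻ t, gC t ≤ ENNReal.ofReal (24 / (1 - (r + s)) * b ^ σ) := by
    rw [hgC, lintegral_indicator mCset]
    have e1 : ∀ t : ℝ, ENNReal.ofReal (6 * |t| ^ (r+s-2))
        = ENNReal.ofReal (6:ℝ) * ENNReal.ofReal (|t| ^ (r+s-2)) :=
      fun t => ENNReal.ofReal_mul (by norm_num)
    simp_rw [e1]
    rw [lintegral_const_mul _ (meas_abs_rpow (r+s-2))]
    have htail := lint_tail_rpow (p := r+s-2) (by linarith) hM0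
    calc ENNReal.ofReal (6:ℝ) * ∫⁻ t in {t : ℝ | M < |t|}, ENNReal.ofReal (|t| ^ (r+s-2))
        ≤ ENNReal.ofReal (6:ℝ)
            * ENNReal.ofReal (2 / (-(r+s-2+1)) * M ^ (r+s-2+1)) :=
          mul_le_mul_right htail _
      _ = ENNReal.ofReal (6 * (2 / (-(r+s-2+1)) * M ^ (r+s-2+1))) :=
          (ENNReal.ofReal_mul (by norm_num)).symm
      _ ≤ ENNReal.ofReal (24 / (1 - (r + s)) * b ^ σ) := by
          apply ENNReal.ofReal_le_ofReal
          have he : r+s-2+1 = σ := by rw [hσdef]; ring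
          rw [he]
          have he2 : -σ = 1 - (r+s) := by rw [hσdef]; ring
          rw [he2]
          calc 6 * (2 / (1 - (r+s)) * M ^ σ) ≤ 6 * (2 / (1 - (r+s)) * (2 * b ^ σ)) := by
                have hpos : (0:ℝ) ≤ 2 / (1 - (r+s)) := by
                  apply div_nonneg (by norm_num); linarith
                apply mul_le_mul_of_nonneg_left _ (by norm_num)
                exact mul_le_mul_of_nonneg_left hMσ hpos
            _ = 24 / (1 - (r+s)) * b ^ σ := by ring
  -- assemble
  calc ∫⁻ t : ℝ, ENNReal.ofReal (|t| ^ (s - 1) * (1 + |a + t|) ^ (r - 1))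
      ≤ ∫⁻ t, (gA t + gB t + gC t) := lintegral_mono hpt
    _ = (∫⁻ t, gA t) + (∫⁻ t, gB t) + ∫⁻ t, gC t := by
        rw [lintegral_add_left (f := fun t => gA t + gB t) (mA.add mB), lintegral_add_left mA]
    _ ≤ ENNReal.ofReal (4 / s * b ^ σ) + ENNReal.ofReal (4 / r * b ^ σ)
          + ENNReal.ofReal (24 / (1 - (r + s)) * b ^ σ) :=
        add_le_add (add_le_add IA IB) IC
    _ = ENNReal.ofReal ((4 / s + 4 / r + 24 / (1 - (r + s))) * b ^ σ) := by
        have n1 : (0:ℝ) ≤ 4 / s * b ^ σ :=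
          mul_nonneg (div_nonneg (by norm_num) hs.le) hbσ
        have n2 : (0:ℝ) ≤ 4 / r * b ^ σ :=
          mul_nonneg (div_nonneg (by norm_num) hr.le) hbσ
        have n3 : (0:ℝ) ≤ 24 / (1 - (r + s)) * b ^ σ :=
          mul_nonneg (div_nonneg (by norm_num) (by linarith)) hbσ
        rw [← ENNReal.ofReal_add n1 n2, ← ENNReal.ofReal_add (add_nonneg n1 n2) n3]
        congr 1
        ring
    _ = ENNReal.ofReal (4 / s + 4 / r + 24 / (1 - (r + s)))
          * ENNReal.ofReal (b ^ σ) := by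
        rw [← ENNReal.ofReal_mul]
        apply add_nonneg (add_nonneg (div_nonneg (by norm_num) hs.le)
          (div_nonneg (by norm_num) hr.le)) (div_nonneg (by norm_num) (by linarith))

lemma aux_one_dim' {r s lam : ℝ} (hr : 0 < r) (hs : 0 < s) (hrs : r + s < 1)
    (hlam : lam ≠ 0) :
    ∃ C : ℝ≥0∞, C ≠ ⊤ ∧ ∀ a : ℝ,
      ∫⁻ t : ℝ, ENNReal.ofReal (|t| ^ (s - 1) * (1 + |a + lam * t|) ^ (r - 1))
        ≤ C * ENNReal.ofReal ((1 + |a|) ^ (r + s - 1)) := by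
  obtain ⟨C, hC, hbound⟩ := aux_one_dim hr hs hrs
  have hl0 : 0 < |lam| := abs_pos.mpr hlam
  refine ⟨ENNReal.ofReal (|lam| ^ (1 - s) * |lam|⁻¹) * C,
    ENNReal.mul_ne_top ENNReal.ofReal_ne_top hC, fun a => ?_⟩
  set h : ℝ → ℝ≥0∞ :=
    fun u => ENNReal.ofReal (|u| ^ (s - 1) * (1 + |a + u|) ^ (r - 1)) with hh
  have mh : Measurable h :=
    ((measurable_abs.pow_const (s-1)).mul
      ((measurable_const.add (measurable_const.add measurable_id).abs).pow_const
        (r-1))).ennreal_ofReal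
  have key : ∀ t : ℝ, ENNReal.ofReal (|t| ^ (s - 1) * (1 + |a + lam * t|) ^ (r - 1))
      = ENNReal.ofReal (|lam| ^ (1 - s)) * h (lam * t) := by
    intro t
    rw [hh]
    rw [← ENNReal.ofReal_mul (Real.rpow_nonneg hl0.le _)]
    congr 1
    have e1 : |lam * t| ^ (s - 1) = |lam| ^ (s - 1) * |t| ^ (s - 1) := by
      rw [abs_mul, Real.mul_rpow (abs_nonneg lam) (abs_nonneg t)]
    have e2 : |lam| ^ (1 - s) * |lam| ^ (s - 1) = 1 := by
      rw [← Real.rpow_add hl0]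
      norm_num
    calc |t| ^ (s - 1) * (1 + |a + lam * t|) ^ (r - 1)
        = (|lam| ^ (1 - s) * |lam| ^ (s - 1)) * (|t| ^ (s - 1)
            * (1 + |a + lam * t|) ^ (r - 1)) := by rw [e2]; ring
      _ = |lam| ^ (1 - s) * (|lam * t| ^ (s - 1) * (1 + |a + lam * t|) ^ (r - 1)) := by
          rw [e1]; ring
  calc ∫⁻ t : ℝ, ENNReal.ofReal (|t| ^ (s - 1) * (1 + |a + lam * t|) ^ (r - 1))
      = ∫⁻ t : ℝ, ENNReal.ofReal (|lam| ^ (1 - s)) * h (lam * t) := by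
        simp_rw [key]
    _ = ENNReal.ofReal (|lam| ^ (1 - s)) * ∫⁻ t : ℝ, h (lam * t) :=
        lintegral_const_mul _ (mh.comp (measurable_const_mul lam))
    _ = ENNReal.ofReal (|lam| ^ (1 - s)) * (ENNReal.ofReal |lam⁻¹| * ∫⁻ u, h u) := by
        rw [← lintegral_map mh (measurable_const_mul lam),
          Real.map_volume_mul_left hlam, lintegral_smul_measure, smul_eq_mul]
    _ ≤ ENNReal.ofReal (|lam| ^ (1 - s))
          * (ENNReal.ofReal |lam⁻¹| * (C * ENNReal.ofReal ((1 + |a|) ^ (r + s - 1)))) := by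
        exact mul_le_mul_right (mul_le_mul_right (hbound a) _) _
    _ = ENNReal.ofReal (|lam| ^ (1 - s) * |lam|⁻¹) * C
          * ENNReal.ofReal ((1 + |a|) ^ (r + s - 1)) := by
        rw [ENNReal.ofReal_mul (Real.rpow_nonneg hl0.le _), abs_inv]
        ring

lemma aux_induction : ∀ (n : ℕ) (s0 : ℝ) (s lam : Fin n → ℝ), 0 < s0 → (∀ i, 0 < s i) →
    s0 + ∑ i, s i < 1 → (∀ i, lam i ≠ 0) →
    ∃ C : ℝ≥0∞, C ≠ ⊤ ∧ ∀ a : ℝ,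
      ∫⁻ y : Fin n → ℝ,
        ENNReal.ofReal ((1 + |a + ∑ i, lam i * y i|) ^ (s0 - 1) * ∏ i, |y i| ^ (s i - 1))
        ≤ C * ENNReal.ofReal ((1 + |a|) ^ ((s0 + ∑ i, s i) - 1)) := by
  intro n
  induction n with
  | zero =>
    intro s0 s lam hs0 hs hsum hlam
    refine ⟨1, ENNReal.one_ne_top, fun a => ?_⟩
    have hvol : (volume : Measure (Fin 0 → ℝ)) Set.univ = 1 := by
      rw [volume_pi, Measure.pi_univ]
      simp
    simp only [Finset.univ_eq_empty, Finset.sum_empty, Finset.prod_empty, add_zero, mul_one]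
    rw [lintegral_const, hvol, mul_one, one_mul]
  | succ n IH =>
    intro s0 s lam hs0 hs hsum hlam
    have hsum_succ : ∑ i : Fin (n+1), s i = s 0 + ∑ i : Fin n, s i.succ := Fin.sum_univ_succ s
    have hpos_tail : (0:ℝ) ≤ ∑ i : Fin n, s i.succ :=
      Finset.sum_nonneg fun i _ => (hs i.succ).le
    have hs0s : s0 + s 0 < 1 := by rw [hsum_succ] at hsum; linarith
    obtain ⟨C1, hC1, h1⟩ := aux_one_dim' (r := s0) (s := s 0) hs0 (hs 0) hs0s (hlam 0)
    obtain ⟨C2, hC2, h2⟩ := IH (s0 + s 0) (fun i => s i.succ) (fun i => lam i.succ)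
      (by have := hs 0; linarith) (fun i => hs i.succ)
      (by rw [hsum_succ] at hsum; linarith) (fun i => hlam i.succ)
    refine ⟨C1 * C2, ENNReal.mul_ne_top hC1 hC2, fun a => ?_⟩
    set G : ℝ × (Fin n → ℝ) → ℝ≥0∞ := fun p =>
      ENNReal.ofReal ((1 + |a + (lam 0 * p.1 + ∑ i : Fin n, lam i.succ * p.2 i)|) ^ (s0 - 1)
        * (|p.1| ^ (s 0 - 1) * ∏ i : Fin n, |p.2 i| ^ (s i.succ - 1))) with hG
    have msum : Measurable fun p : ℝ × (Fin n → ℝ) => ∑ i : Fin n, lam i.succ * p.2 i :=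
      Finset.measurable_sum _ fun i _ =>
        ((measurable_pi_apply i).comp measurable_snd).const_mul _
    have mprod : Measurable fun p : ℝ × (Fin n → ℝ) => ∏ i : Fin n, |p.2 i| ^ (s i.succ - 1) :=
      Finset.measurable_prod _ fun i _ =>
        ((measurable_pi_apply i).comp measurable_snd).abs.pow_const _
    have mG : Measurable G := by
      apply Measurable.ennreal_ofReal
      exact ((measurable_const.add
          (measurable_const.add ((measurable_fst.const_mul (lam 0)).add msum)).abs).pow_const
            _).mul ((measurable_fst.abs.pow_const _).mul mprod)
    have step1 : ∫⁻ y : Fin (n+1) → ℝ,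
        ENNReal.ofReal ((1 + |a + ∑ i, lam i * y i|) ^ (s0 - 1) * ∏ i, |y i| ^ (s i - 1))
        = ∫⁻ p : ℝ × (Fin n → ℝ), G p := by
      rw [← ((volume_preserving_piFinSuccAbove (fun _ : Fin (n+1) => ℝ) 0).symm).lintegral_comp
        (by fun_prop)]
      apply lintegral_congr
      intro p
      simp only [hG, MeasurableEquiv.piFinSuccAbove_symm_apply, Fin.insertNthEquiv_zero,
        Fin.consEquiv_apply, Fin.sum_univ_succ, Fin.prod_univ_succ, Fin.cons_zero,
        Fin.cons_succ]
    have step2 : ∫⁻ p : ℝ × (Fin n → ℝ), G p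
        = ∫⁻ z : Fin n → ℝ, ∫⁻ t : ℝ, G (t, z) :=
      lintegral_prod_symm G mG.aemeasurable
    have step3 : ∀ z : Fin n → ℝ, ∫⁻ t : ℝ, G (t, z)
        ≤ C1 * ENNReal.ofReal ((1 + |a + ∑ i : Fin n, lam i.succ * z i|) ^ ((s0 + s 0) - 1)
            * ∏ i : Fin n, |z i| ^ (s i.succ - 1)) := by
      intro z
      set az : ℝ := a + ∑ i : Fin n, lam i.succ * z i with haz
      set Pz : ℝ := ∏ i : Fin n, |z i| ^ (s i.succ - 1) with hPz
      have hPz0 : 0 ≤ Pz := Finset.prod_nonneg fun i _ => Real.rpow_nonneg (abs_nonneg _) _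
      have keyz : ∀ t : ℝ, G (t, z)
          = ENNReal.ofReal (|t| ^ (s 0 - 1) * (1 + |az + lam 0 * t|) ^ (s0 - 1))
            * ENNReal.ofReal Pz := by
        intro t
        have hsum_eq : a + (lam 0 * t + ∑ i : Fin n, lam i.succ * z i) = az + lam 0 * t := by
          rw [haz]; ring
        simp only [hG]
        rw [← ENNReal.ofReal_mul' hPz0]
        congr 1
        rw [hsum_eq, hPz]
        ring
      have minner : Measurable fun t : ℝ =>
          ENNReal.ofReal (|t| ^ (s 0 - 1) * (1 + |az + lam 0 * t|) ^ (s0 - 1)) :=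
        ((measurable_abs.pow_const _).mul ((measurable_const.add
          (measurable_const.add (measurable_id.const_mul _)).abs).pow_const _)).ennreal_ofReal
      calc ∫⁻ t : ℝ, G (t, z)
          = (∫⁻ t : ℝ, ENNReal.ofReal (|t| ^ (s 0 - 1) * (1 + |az + lam 0 * t|) ^ (s0 - 1)))
              * ENNReal.ofReal Pz := by
            simp_rw [keyz]
            exact lintegral_mul_const _ minner
        _ ≤ C1 * ENNReal.ofReal ((1 + |az|) ^ ((s0 + s 0) - 1)) * ENNReal.ofReal Pz :=
            mul_le_mul_left (h1 az) _
        _ = C1 * ENNReal.ofReal ((1 + |az|) ^ ((s0 + s 0) - 1) * Pz) := by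
            rw [ENNReal.ofReal_mul (Real.rpow_nonneg (by positivity) _)]
            ring
    calc ∫⁻ y : Fin (n+1) → ℝ,
        ENNReal.ofReal ((1 + |a + ∑ i, lam i * y i|) ^ (s0 - 1) * ∏ i, |y i| ^ (s i - 1))
        = ∫⁻ z : Fin n → ℝ, ∫⁻ t : ℝ, G (t, z) := by rw [step1, step2]
      _ ≤ ∫⁻ z : Fin n → ℝ, C1 * ENNReal.ofReal
            ((1 + |a + ∑ i : Fin n, lam i.succ * z i|) ^ ((s0 + s 0) - 1)
              * ∏ i : Fin n, |z i| ^ (s i.succ - 1)) := lintegral_mono step3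
      _ = C1 * ∫⁻ z : Fin n → ℝ, ENNReal.ofReal
            ((1 + |a + ∑ i : Fin n, lam i.succ * z i|) ^ ((s0 + s 0) - 1)
              * ∏ i : Fin n, |z i| ^ (s i.succ - 1)) :=
          lintegral_const_mul' _ _ hC1
      _ ≤ C1 * (C2 * ENNReal.ofReal ((1 + |a|) ^ (((s0 + s 0) + ∑ i : Fin n, s i.succ) - 1))) :=
          mul_le_mul_right (h2 a) _
      _ = C1 * C2 * ENNReal.ofReal ((1 + |a|) ^ ((s0 + ∑ i : Fin (n+1), s i) - 1)) := by
          rw [hsum_succ, ← add_assoc, mul_assoc]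

end DecayAux

/-- if `s_0, …, s_n > 0` with `s_0 + ⋯ + s_n < 1` and `L(y) = ∑ λ_i y_i` has
all coefficients nonzero, then `∫_{ℝ^n} (1+|L(y)|)^{s_0-1} ∏ |y_i|^{s_i-1} dy < ∞`. -/
theorem lintegral_decay_linear_form_finite
    (n : ℕ) (s0 : ℝ) (s : Fin n → ℝ)
    (hs0 : 0 < s0) (hs : ∀ i, 0 < s i) (hsum : s0 + ∑ i, s i < 1)
    (lam : Fin n → ℝ) (hlam : ∀ i, lam i ≠ 0) :
    ∫⁻ y : Fin n → ℝ,
      ENNReal.ofReal ((1 + |∑ i, lam i * y i|) ^ (s0 - 1) * ∏ i, |y i| ^ (s i - 1))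
      ≠ ⊤ := by
  obtain ⟨C, hC, hbound⟩ := DecayAux.aux_induction n s0 s lam hs0 hs hsum hlam
  have h0 := hbound 0
  simp only [zero_add, abs_zero, add_zero, Real.one_rpow, ENNReal.ofReal_one, mul_one] at h0
  exact ne_top_of_le_ne_top hC h0
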